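/- For a graph F of maximal degree Δ(F) ≥ 2 and a symmetric measurable kernel U: [0,1]² → [−1,1], the homomorphism density satisfies |t(F,U)| ≤ ‖U‖_{Δ(F)}^{e(F)} ≤ ‖U‖₂^{2e(F)/Δ(F)}, where ‖U‖_q is the L^q norm on [0,1]². -/

import Mathlib

open MeasureTheory Finset
open scoped ENNReal

section Aux

/-- Generalized Hölder inequality on a probability space: at most `Δ` factors,
each estimated in `L^Δ`. -/
lemma hoelder_prob {α ι : Type*} [MeasurableSpace α] {μ : Measure α} [IsProbabilityMeasure μ]
    {Δ : ℕ} (hΔ : 0 < Δ) (s : Finset ι) (g : ι → α → ℝ≥0∞)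
    (hg : ∀ i ∈ s, Measurable (g i)) (hcard : s.card ≤ Δ) :
    ∫⁻ y, ∏ i ∈ s, g i y ∂μ ≤ ∏ i ∈ s, (∫⁻ y, g i y ^ (Δ : ℝ) ∂μ) ^ (Δ : ℝ)⁻¹ := by
  classical
  have hΔR : (0:ℝ) < (Δ : ℝ) := by positivity
  set p : Option ι → ℝ := fun o => o.elim (1 - s.card / Δ) fun _ => (Δ : ℝ)⁻¹ with hp
  set f : Option ι → α → ℝ≥0∞ := fun o => o.elim (fun _ => 1) fun i y => g i y ^ (Δ : ℝ) with hf
  have key := ENNReal.lintegral_prod_norm_pow_le (μ := μ) (Finset.insertNone s) (f := f)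
    (p := p) ?_ ?_ ?_
  · calc ∫⁻ y, ∏ i ∈ s, g i y ∂μ
        = ∫⁻ y, ∏ o ∈ Finset.insertNone s, f o y ^ p o ∂μ := by
          congr 1; funext y
          rw [Finset.prod_insertNone]
          simp only [hp, hf, Option.elim]
          rw [ENNReal.one_rpow, one_mul]
          exact Finset.prod_congr rfl fun i _ =>
            (ENNReal.rpow_rpow_inv (ne_of_gt hΔR) _).symm
      _ ≤ ∏ o ∈ Finset.insertNone s, (∫⁻ y, f o y ∂μ) ^ p o := key
      _ = ∏ i ∈ s, (∫⁻ y, g i y ^ (Δ:ℝ) ∂μ) ^ (Δ : ℝ)⁻¹ := by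
          rw [Finset.prod_insertNone]
          simp [hp, hf]
  · rintro (_|i) hi
    · exact measurable_const.aemeasurable
    · exact ((hg i (by simpa using hi)).pow measurable_const).aemeasurable
  · rw [Finset.sum_insertNone]
    simp only [hp, Option.elim]
    rw [Finset.sum_const, nsmul_eq_mul]
    field_simp
    ring
  · rintro (_|i) hi
    · simp only [hp, Option.elim, sub_nonneg]
      exact div_le_one_of_le₀ (by exact_mod_cast hcard) hΔR.le
    · exact inv_nonneg.2 hΔR.le

variable {v : ℕ} (μ : Measure ℝ) (W : ℝ → ℝ → ℝ≥0∞) (Δ : ℕ)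

/-- The "one-vertex-integrated" kernel `h(c) = (∫ W(t,c)^Δ dμ(t))^{1/Δ}`. -/
noncomputable def kerH (c : ℝ) : ℝ≥0∞ :=
  (∫⁻ t, W t c ^ (Δ : ℝ) ∂μ) ^ (Δ : ℝ)⁻¹

variable (hWsym : ∀ a b, W a b = W b a)

/-- The product of kernel factors over the edges `E` together with `n a` copies of the
one-vertex-integrated kernel at each vertex `a`. -/
noncomputable def FF (E : Finset (Sym2 (Fin v))) (n : Fin v → ℕ) (z : Fin v → ℝ) : ℝ≥0∞ :=
  (∏ e ∈ E, Sym2.lift ⟨fun a b => W (z a) (z b), fun a b => hWsym (z a) (z b)⟩ e)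
    * ∏ a, kerH μ W Δ (z a) ^ n a

variable (hW : Measurable fun q : ℝ × ℝ => W q.1 q.2) [SigmaFinite μ]

include hW in
lemma measurable_kerH : Measurable (kerH μ W Δ) := by
  apply Measurable.pow _ measurable_const
  exact Measurable.lintegral_prod_right
    (f := fun c t => W t c ^ (Δ : ℝ)) ((hW.comp measurable_swap).pow measurable_const)

include hW in
lemma measurable_edge (e : Sym2 (Fin v)) :
    Measurable fun z : Fin v → ℝ =>
      Sym2.lift ⟨fun a b => W (z a) (z b), fun a b => hWsym (z a) (z b)⟩ e := by
  induction e with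
  | _ a b =>
    simp only [Sym2.lift_mk]
    have h1 : Measurable fun z : Fin v → ℝ => (z a, z b) :=
      (measurable_pi_apply a).prodMk (measurable_pi_apply b)
    exact hW.comp h1

include hW in
lemma measurable_FF (E : Finset (Sym2 (Fin v))) (n : Fin v → ℕ) :
    Measurable (FF μ W Δ hWsym E n) := by
  apply Measurable.mul
  · exact Finset.measurable_prod _ fun e _ => measurable_edge (W := W) (hWsym := hWsym) (hW := hW) e
  · exact Finset.measurable_prod _ fun a _ =>
      ((measurable_kerH (μ := μ) (W := W) (Δ := Δ) (hW := hW)).comp (measurable_pi_apply a)).pow_const _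

end Aux

section Finner

variable {v : ℕ} {μ : Measure ℝ} [IsProbabilityMeasure μ] {W : ℝ → ℝ → ℝ≥0∞}
  {Δ : ℕ}

/-- Finner-type inequality for graphs, proved by integrating out one vertex at a time and
using Hölder's inequality at each vertex. -/
lemma finner (hW : Measurable fun q : ℝ × ℝ => W q.1 q.2) (hWsym : ∀ a b, W a b = W b a)
    (hΔ : 0 < Δ) (A : ℝ≥0∞) (hA : A = ∫⁻ q : ℝ × ℝ, W q.1 q.2 ^ (Δ : ℝ) ∂(μ.prod μ))
    (s : Finset (Fin v)) :
    ∀ (E : Finset (Sym2 (Fin v))) (n : Fin v → ℕ),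
      (∀ e ∈ E, ¬ e.IsDiag) →
      (∀ e ∈ E, ∀ a, a ∈ e → a ∈ s) →
      (∀ a, n a ≠ 0 → a ∈ s) →
      (∀ a : Fin v, (E.filter (fun e => a ∈ e)).card + n a ≤ Δ) →
      ∀ x : Fin v → ℝ,
        (∫⋯∫⁻_s, FF μ W Δ hWsym E n ∂(fun _ => μ)) x
          ≤ A ^ (((E.card + ∑ a, n a : ℕ) : ℝ) / (Δ : ℝ)) := by
  classical
  have hΔR : (0:ℝ) < (Δ:ℝ) := by positivity
  -- the key integral identity for the one-vertex kernel
  have hkerH : ∫⁻ t, kerH μ W Δ t ^ (Δ : ℝ) ∂μ = A := by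
    have h1 : ∀ t, kerH μ W Δ t ^ (Δ : ℝ) = ∫⁻ u, W u t ^ (Δ : ℝ) ∂μ := fun t =>
      ENNReal.rpow_inv_rpow (ne_of_gt hΔR) _
    simp_rw [h1]
    rw [hA]
    have hm0 : Measurable fun q : ℝ × ℝ => W q.2 q.1 := hW.comp measurable_swap
    calc ∫⁻ t, ∫⁻ u, W u t ^ (Δ:ℝ) ∂μ ∂μ
        = ∫⁻ q : ℝ × ℝ, W q.2 q.1 ^ (Δ:ℝ) ∂(μ.prod μ) :=
          (MeasureTheory.lintegral_prod _ ((hm0.pow measurable_const).aemeasurable)).symm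
      _ = ∫⁻ q : ℝ × ℝ, W q.1 q.2 ^ (Δ:ℝ) ∂(μ.prod μ) :=
          lintegral_congr fun q => by rw [hWsym]
  induction s using Finset.induction with
  | empty =>
    intro E n hdiag hE hn hdeg x
    have hE0 : E = ∅ := by
      refine Finset.eq_empty_of_forall_notMem fun e he => ?_
      simpa using hE e he e.out.1 (Sym2.out_fst_mem e)
    have hn0 : ∀ a, n a = 0 := fun a => by
      by_contra h; simpa using hn a h
    have : FF μ W Δ hWsym E n = fun _ => 1 := by
      funext z; simp [FF, hE0, hn0]
    rw [this, lmarginal_empty]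
    simp [hE0, hn0]
  | @insert i s hi ih =>
    intro E n hdiag hE hn hdeg x
    set Ei : Finset (Sym2 (Fin v)) := E.filter (fun e => i ∈ e) with hEi
    set E' : Finset (Sym2 (Fin v)) := E.filter (fun e => ¬ i ∈ e) with hE'
    set Ni : Finset (Fin v) := (Finset.univ.erase i).filter (fun b => s(i, b) ∈ E) with hNi
    set n' : Fin v → ℕ :=
      (fun a => if a = i then 0 else n a + (if s(i, a) ∈ E then 1 else 0)) with hn'
    -- the bijection between `Ni` and `Ei`
    have hmapmem : ∀ b ∈ Ni, s(i, b) ∈ Ei := by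
      intro b hb
      rw [hNi, Finset.mem_filter] at hb
      rw [hEi, Finset.mem_filter]
      exact ⟨hb.2, Sym2.mem_mk_left _ _⟩
    have hinj : ∀ b ∈ Ni, ∀ b' ∈ Ni, s(i, b) = s(i, b') → b = b' := by
      intro b hb b' hb' h
      rw [Sym2.eq_iff] at h
      rcases h with ⟨-, h⟩ | ⟨h1, h2⟩
      · exact h
      · exfalso
        rw [hNi, Finset.mem_filter, Finset.mem_erase] at hb
        exact hb.1.1 h2
    have hsurj : ∀ e ∈ Ei, ∃ b, ∃ hb : b ∈ Ni, s(i, b) = e := by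
      intro e he
      rw [hEi, Finset.mem_filter] at he
      refine ⟨Sym2.Mem.other he.2, ?_, Sym2.other_spec he.2⟩
      rw [hNi, Finset.mem_filter, Finset.mem_erase]
      refine ⟨⟨Sym2.other_ne (hdiag e he.1) he.2, Finset.mem_univ _⟩, ?_⟩
      rw [Sym2.other_spec he.2]; exact he.1
    have hcardNi : Ni.card = Ei.card :=
      Finset.card_bij (fun b _ => s(i, b)) hmapmem hinj (fun e he => hsurj e he)
    -- counting
    have hcount : E.card + ∑ a, n a = n i + (E'.card + ∑ a, n' a) := by
      have h1 : Ei.card + E'.card = E.card :=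
        Finset.card_filter_add_card_filter_not (fun e => i ∈ e)
      have h2 : n i + ∑ a ∈ Finset.univ.erase i, n a = ∑ a, n a :=
        Finset.add_sum_erase _ n (Finset.mem_univ i)
      have h3 : ∑ a, n' a = ∑ a ∈ Finset.univ.erase i, n' a := by
        rw [← Finset.add_sum_erase _ n' (Finset.mem_univ i)]
        simp [hn']
      have h4 : ∑ a ∈ Finset.univ.erase i, n' a
          = (∑ a ∈ Finset.univ.erase i, n a) + Ni.card := by
        have : ∀ a ∈ Finset.univ.erase i, n' a = n a + (if s(i, a) ∈ E then 1 else 0) := by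
          intro a ha
          simp only [hn', if_neg (Finset.mem_erase.1 ha).1]
        rw [Finset.sum_congr rfl this, Finset.sum_add_distrib, hNi, Finset.card_filter]
      omega
    -- hypotheses for the induction hypothesis
    have hdiag' : ∀ e ∈ E', ¬ e.IsDiag := fun e he =>
      hdiag e (Finset.mem_of_mem_filter e he)
    have hE'' : ∀ e ∈ E', ∀ a, a ∈ e → a ∈ s := by
      intro e he a ha
      rw [hE', Finset.mem_filter] at he
      have hai : a ≠ i := fun h => he.2 (h ▸ ha)
      have := hE e he.1 a ha
      rw [Finset.mem_insert] at this
      exact this.resolve_left hai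
    have hn'' : ∀ a, n' a ≠ 0 → a ∈ s := by
      intro a ha
      by_cases hai : a = i
      · exfalso; apply ha; simp [hn', hai]
      · have ha' : n a ≠ 0 ∨ s(i, a) ∈ E := by
          by_contra hc
          push_neg at hc
          apply ha
          simp [hn', hai, hc.1, hc.2]
        rcases ha' with h' | h'
        · exact (Finset.mem_insert.1 (hn a h')).resolve_left hai
        · exact (Finset.mem_insert.1 (hE _ h' a (Sym2.mem_mk_right i a))).resolve_left hai
    have hdeg' : ∀ a : Fin v, (E'.filter (fun e => a ∈ e)).card + n' a ≤ Δ := by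
      intro a
      by_cases hai : a = i
      · subst hai
        have : E'.filter (fun e => a ∈ e) = ∅ := by
          refine Finset.eq_empty_of_forall_notMem fun e he => ?_
          rw [Finset.mem_filter, hE', Finset.mem_filter] at he
          exact he.1.2 he.2
        simp [this, hn']
      · have hkey : (E'.filter (fun e => a ∈ e)).card + (if s(i, a) ∈ E then 1 else 0)
            ≤ (E.filter (fun e => a ∈ e)).card := by
          set T : Finset (Sym2 (Fin v)) := E.filter (fun e => a ∈ e) with hT
          have t1 : (T.filter (fun e => i ∈ e)).card + (T.filter (fun e => ¬ i ∈ e)).card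
              = T.card := Finset.card_filter_add_card_filter_not _
          have t2 : T.filter (fun e => ¬ i ∈ e) = E'.filter (fun e => a ∈ e) := by
            rw [hT, hE', Finset.filter_filter, Finset.filter_filter]
            exact Finset.filter_congr fun e _ => by tauto
          have t2' : (T.filter (fun e => ¬ i ∈ e)).card = (E'.filter (fun e => a ∈ e)).card := by
            rw [t2]
          have t3 : (if s(i, a) ∈ E then 1 else 0) ≤ (T.filter (fun e => i ∈ e)).card := by
            split_ifs with h
            · refine Finset.card_pos.2 ⟨s(i, a), ?_⟩
              rw [Finset.mem_filter, hT, Finset.mem_filter]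
              exact ⟨⟨h, Sym2.mem_mk_right i a⟩, Sym2.mem_mk_left i a⟩
            · exact Nat.zero_le _
          omega
        have := hdeg a
        simp only [hn', if_neg hai]
        omega

    -- measurability
    have hmeasFF : ∀ (E₀ : Finset (Sym2 (Fin v))) (n₀ : Fin v → ℕ),
        Measurable (FF μ W Δ hWsym E₀ n₀) := fun E₀ n₀ =>
      measurable_FF (μ := μ) (W := W) (Δ := Δ) (hWsym := hWsym) (hW := hW) E₀ n₀
    -- the pointwise Hölder bound at the vertex `i`
    have key : ∀ x' : Fin v → ℝ,
        ∫⁻ y, FF μ W Δ hWsym E n (Function.update x' i y) ∂μ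
          ≤ A ^ ((n i : ℝ) / (Δ : ℝ)) * FF μ W Δ hWsym E' n' x' := by
      intro x'
      set g : Fin v ⊕ Fin (n i) → ℝ → ℝ≥0∞ :=
        Sum.elim (fun b t => W t (x' b)) (fun _ => kerH μ W Δ) with hg
      set S : Finset (Fin v ⊕ Fin (n i)) := Ni.disjSum Finset.univ with hS
      have hgmeas : ∀ j ∈ S, Measurable (g j) := by
        rintro (b | c) _
        · have hb : Measurable fun t : ℝ => (t, x' b) := measurable_id.prodMk measurable_const
          exact hW.comp hb
        · exact measurable_kerH (μ := μ) (W := W) (Δ := Δ) (hW := hW)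
      have hScard : S.card ≤ Δ := by
        rw [hS, Finset.card_disjSum, Finset.card_univ, Fintype.card_fin, hcardNi]
        exact hdeg i
      set C : ℝ≥0∞ :=
        (∏ e ∈ E', Sym2.lift ⟨fun a b => W (x' a) (x' b), fun a b => hWsym (x' a) (x' b)⟩ e) *
          ∏ a ∈ Finset.univ.erase i, kerH μ W Δ (x' a) ^ n a with hC
      have hdecomp : ∀ y : ℝ, FF μ W Δ hWsym E n (Function.update x' i y)
          = (∏ j ∈ S, g j y) * C := by
        intro y
        rw [FF, ← Finset.prod_filter_mul_prod_filter_not E (fun e => i ∈ e)]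
        have e1 : ∏ b ∈ Ni, W y (x' b)
            = ∏ e ∈ Ei, Sym2.lift ⟨fun a b => W (Function.update x' i y a)
                (Function.update x' i y b), fun a b => hWsym _ _⟩ e := by
          refine Finset.prod_bij (fun b _ => s(i, b)) hmapmem hinj (fun e he => hsurj e he) ?_
          intro b hb
          have hbne : b ≠ i := (Finset.mem_erase.1 (Finset.mem_filter.1 hb).1).1
          simp [Sym2.lift_mk, Function.update_self, Function.update_of_ne hbne]
        have e2 : ∏ e ∈ E', Sym2.lift ⟨fun a b => W (Function.update x' i y a)
              (Function.update x' i y b), fun a b => hWsym _ _⟩ e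
            = ∏ e ∈ E', Sym2.lift ⟨fun a b => W (x' a) (x' b),
                fun a b => hWsym (x' a) (x' b)⟩ e := by
          refine Finset.prod_congr rfl fun e he => ?_
          have hie : ¬ i ∈ e := (Finset.mem_filter.1 he).2
          induction e with
          | _ a b =>
            have hai : a ≠ i := fun h => hie (h ▸ Sym2.mem_mk_left a b)
            have hbi : b ≠ i := fun h => hie (h ▸ Sym2.mem_mk_right a b)
            simp [Sym2.lift_mk, Function.update_of_ne hai, Function.update_of_ne hbi]
        have e3 : ∏ a, kerH μ W Δ (Function.update x' i y a) ^ n a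
            = kerH μ W Δ y ^ n i
              * ∏ a ∈ Finset.univ.erase i, kerH μ W Δ (x' a) ^ n a := by
          rw [← Finset.mul_prod_erase Finset.univ
            (fun a => kerH μ W Δ (Function.update x' i y a) ^ n a) (Finset.mem_univ i)]
          rw [Function.update_self]
          congr 1
          refine Finset.prod_congr rfl fun a ha => ?_
          rw [Function.update_of_ne (Finset.mem_erase.1 ha).1]
        have e4 : ∏ j ∈ S, g j y = (∏ b ∈ Ni, W y (x' b)) * kerH μ W Δ y ^ n i := by
          rw [hS, Finset.prod_disjSum]
          simp [hg, Finset.prod_const]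
        rw [e2, e3, e4, ← e1, hC]
        ring
      have hA2 : ∀ c : Fin (n i),
          (∫⁻ t, g (Sum.inr c) t ^ (Δ : ℝ) ∂μ) ^ (Δ : ℝ)⁻¹ = A ^ (Δ : ℝ)⁻¹ := by
        intro c
        simp only [hg, Sum.elim_inr]
        rw [hkerH]
      have hA1 : ∀ b, (∫⁻ t, g (Sum.inl b) t ^ (Δ : ℝ) ∂μ) ^ (Δ : ℝ)⁻¹
          = kerH μ W Δ (x' b) := by
        intro b
        simp only [hg, Sum.elim_inl, kerH]
      have hpow : (A ^ (Δ : ℝ)⁻¹) ^ (n i : ℕ) = A ^ ((n i : ℝ) / (Δ : ℝ)) := by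
        rw [← ENNReal.rpow_natCast (A ^ (Δ:ℝ)⁻¹) (n i), ← ENNReal.rpow_mul]
        congr 1
        rw [div_eq_mul_inv]
        ring
      calc ∫⁻ y, FF μ W Δ hWsym E n (Function.update x' i y) ∂μ
          = (∫⁻ y, ∏ j ∈ S, g j y ∂μ) * C := by
            simp_rw [hdecomp]
            exact lintegral_mul_const _ (Finset.measurable_prod S fun j hj => hgmeas j hj)
        _ ≤ (∏ j ∈ S, (∫⁻ t, g j t ^ (Δ : ℝ) ∂μ) ^ (Δ : ℝ)⁻¹) * C :=
            mul_le_mul_left (hoelder_prob hΔ S g hgmeas hScard) _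
        _ = A ^ ((n i : ℝ) / (Δ : ℝ)) * FF μ W Δ hWsym E' n' x' := by
            rw [hS, Finset.prod_disjSum]
            have r1 : ∏ b ∈ Ni, (∫⁻ t, g (Sum.inl b) t ^ (Δ : ℝ) ∂μ) ^ (Δ : ℝ)⁻¹
                = ∏ b ∈ Ni, kerH μ W Δ (x' b) := Finset.prod_congr rfl fun b _ => hA1 b
            have r2 : ∏ c ∈ (Finset.univ : Finset (Fin (n i))),
                  (∫⁻ t, g (Sum.inr c) t ^ (Δ : ℝ) ∂μ) ^ (Δ : ℝ)⁻¹
                = A ^ ((n i : ℝ) / (Δ : ℝ)) := by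
              rw [Finset.prod_congr rfl fun c _ => hA2 c, Finset.prod_const, Finset.card_univ,
                Fintype.card_fin, hpow]
            rw [r1, r2]
            have hFF' : FF μ W Δ hWsym E' n' x'
                = (∏ e ∈ E', Sym2.lift ⟨fun a b => W (x' a) (x' b),
                    fun a b => hWsym (x' a) (x' b)⟩ e) *
                  ((∏ a ∈ Finset.univ.erase i, kerH μ W Δ (x' a) ^ n a) *
                    ∏ b ∈ Ni, kerH μ W Δ (x' b)) := by
              rw [FF, ← Finset.mul_prod_erase Finset.univ
                (fun a => kerH μ W Δ (x' a) ^ n' a) (Finset.mem_univ i)]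
              have h0 : n' i = 0 := by simp [hn']
              rw [h0, pow_zero, one_mul]
              have hsplit : ∀ a ∈ Finset.univ.erase i, kerH μ W Δ (x' a) ^ n' a
                  = kerH μ W Δ (x' a) ^ n a
                    * (if s(i, a) ∈ E then kerH μ W Δ (x' a) else 1) := by
                intro a ha
                simp only [hn', if_neg (Finset.mem_erase.1 ha).1, pow_add]
                congr 1
                split_ifs <;> simp
              rw [Finset.prod_congr rfl hsplit, Finset.prod_mul_distrib]
              have : ∏ a ∈ Finset.univ.erase i,
                    (if s(i, a) ∈ E then kerH μ W Δ (x' a) else 1)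
                  = ∏ b ∈ Ni, kerH μ W Δ (x' b) := by
                rw [hNi, Finset.prod_filter]
              rw [this]
            rw [hFF', hC]
            ring
    -- assemble
    have hconst : ∀ (c : ℝ≥0∞) (f : (Fin v → ℝ) → ℝ≥0∞), Measurable f →
        (∫⋯∫⁻_s, (fun z => c * f z) ∂(fun _ => μ)) x
          = c * (∫⋯∫⁻_s, f ∂(fun _ => μ)) x := by
      intro c f hf
      simp only [lmarginal]
      have hm : Measurable fun y : { a // a ∈ s } → ℝ => f (Function.updateFinset x s y) :=
        hf.comp measurable_updateFinset
      rw [lintegral_const_mul c hm]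
    calc (∫⋯∫⁻_insert i s, FF μ W Δ hWsym E n ∂fun _ => μ) x
        = (∫⋯∫⁻_s, (fun x' => ∫⁻ y, FF μ W Δ hWsym E n (Function.update x' i y) ∂μ)
            ∂fun _ => μ) x := by
          rw [lmarginal_insert' _ (hmeasFF E n) hi]
      _ ≤ (∫⋯∫⁻_s, (fun x' => A ^ ((n i : ℝ) / (Δ : ℝ)) * FF μ W Δ hWsym E' n' x')
            ∂fun _ => μ) x := lmarginal_mono (fun x' => key x') x
      _ = A ^ ((n i : ℝ) / (Δ : ℝ)) * (∫⋯∫⁻_s, FF μ W Δ hWsym E' n' ∂fun _ => μ) x :=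
          hconst _ _ (hmeasFF E' n')
      _ ≤ A ^ ((n i : ℝ) / (Δ : ℝ)) * A ^ (((E'.card + ∑ a, n' a : ℕ) : ℝ) / (Δ : ℝ)) :=
          mul_le_mul_right (ih E' n' hdiag' hE'' hn'' hdeg' x) _
      _ = A ^ (((E.card + ∑ a, n a : ℕ) : ℝ) / (Δ : ℝ)) := by
          rw [← ENNReal.rpow_add_of_nonneg _ _ (by positivity) (by positivity)]
          congr 1
          rw [← add_div]
          have hc : ((n i : ℝ)) + ((E'.card + ∑ a, n' a : ℕ) : ℝ)
              = ((E.card + ∑ a, n a : ℕ) : ℝ) := by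
            rw [← Nat.cast_add]
            exact_mod_cast congrArg (Nat.cast : ℕ → ℝ) hcount.symm
          rw [hc]

end Finner

open MeasureTheory

theorem stmt_13 {v : ℕ} (F : SimpleGraph (Fin v)) [DecidableRel F.Adj]
    (hΔ : 2 ≤ F.maxDegree)
    (U : ℝ → ℝ → ℝ)
    (hmeas : Measurable fun q : ℝ × ℝ => U q.1 q.2)
    (hsym : ∀ x y, U x y = U y x)
    (hbd : ∀ x y, |U x y| ≤ 1) :
    |∫ x in Set.univ.pi fun _ : Fin v => Set.Icc (0 : ℝ) 1,
        ∏ e ∈ F.edgeFinset,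
          Sym2.lift ⟨fun i j => U (x i) (x j), fun i j => hsym (x i) (x j)⟩ e|
      ≤ ((∫ q in Set.Icc (0 : ℝ) 1 ×ˢ Set.Icc (0 : ℝ) 1,
            |U q.1 q.2| ^ (F.maxDegree : ℝ)) ^ (1 / (F.maxDegree : ℝ)))
          ^ F.edgeFinset.card ∧
    ((∫ q in Set.Icc (0 : ℝ) 1 ×ˢ Set.Icc (0 : ℝ) 1,
          |U q.1 q.2| ^ (F.maxDegree : ℝ)) ^ (1 / (F.maxDegree : ℝ)))
        ^ F.edgeFinset.card
      ≤ ((∫ q in Set.Icc (0 : ℝ) 1 ×ˢ Set.Icc (0 : ℝ) 1,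
            |U q.1 q.2| ^ (2 : ℝ)) ^ ((1 : ℝ) / 2))
          ^ ((2 * F.edgeFinset.card : ℝ) / (F.maxDegree : ℝ)) := by
  classical
  set Δ : ℕ := F.maxDegree with hΔdef
  set m : ℕ := F.edgeFinset.card with hm
  have hΔ0 : 0 < Δ := lt_of_lt_of_le (by norm_num) hΔ
  have hΔR : (0:ℝ) < (Δ : ℝ) := by positivity
  set μ : Measure ℝ := volume.restrict (Set.Icc 0 1) with hμ
  have hprob : IsProbabilityMeasure μ := by
    constructor
    rw [hμ, Measure.restrict_apply_univ]
    simp [Real.volume_Icc]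
  set W : ℝ → ℝ → ℝ≥0∞ := fun a b => ENNReal.ofReal |U a b| with hWdef
  have hW : Measurable fun q : ℝ × ℝ => W q.1 q.2 := hmeas.abs.ennreal_ofReal
  have hWsym : ∀ a b, W a b = W b a := fun a b => by
    simp only [hWdef]; rw [hsym a b]
  have hW1 : ∀ a b, W a b ≤ 1 := fun a b => by
    simp only [hWdef]
    calc ENNReal.ofReal |U a b| ≤ ENNReal.ofReal 1 := ENNReal.ofReal_le_ofReal (hbd a b)
      _ = 1 := by norm_num
  set A : ℝ≥0∞ := ∫⁻ q : ℝ × ℝ, W q.1 q.2 ^ (Δ : ℝ) ∂(μ.prod μ) with hA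
  set B : ℝ≥0∞ := ∫⁻ q : ℝ × ℝ, W q.1 q.2 ^ (2 : ℝ) ∂(μ.prod μ) with hB
  have hbound : ∀ p : ℝ, 0 ≤ p → (∫⁻ q : ℝ × ℝ, W q.1 q.2 ^ p ∂(μ.prod μ)) ≤ 1 := by
    intro p hp
    calc ∫⁻ q : ℝ × ℝ, W q.1 q.2 ^ p ∂(μ.prod μ)
        ≤ ∫⁻ _ : ℝ × ℝ, 1 ∂(μ.prod μ) := lintegral_mono fun q => by
          calc W q.1 q.2 ^ p ≤ (1 : ℝ≥0∞) ^ p :=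
                ENNReal.rpow_le_rpow (hW1 _ _) hp
            _ = 1 := ENNReal.one_rpow p
      _ = 1 := by simp
  have hA1 : A ≤ 1 := hbound _ (by positivity)
  have hB1 : B ≤ 1 := hbound _ (by norm_num)
  -- identification of the measures
  have hsquare : (volume : Measure (ℝ × ℝ)).restrict (Set.Icc 0 1 ×ˢ Set.Icc 0 1)
      = μ.prod μ := by
    rw [hμ, MeasureTheory.Measure.volume_eq_prod, ← Measure.prod_restrict]
  have hbox : (volume : Measure (Fin v → ℝ)).restrict (Set.univ.pi fun _ => Set.Icc 0 1)
      = Measure.pi fun _ => μ := by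
    refine (Measure.pi_eq (μ := fun _ : Fin v => μ) fun t ht => ?_).symm
    rw [Measure.restrict_apply (MeasurableSet.univ_pi ht), ← Set.pi_inter_distrib,
      volume_pi_pi]
    exact Finset.prod_congr rfl fun i _ => (Measure.restrict_apply (ht i)).symm
  -- set integrals of powers of |U| as `toReal` of lintegrals
  have habs : ∀ p : ℝ, 0 ≤ p →
      (∫ q in Set.Icc (0:ℝ) 1 ×ˢ Set.Icc (0:ℝ) 1, |U q.1 q.2| ^ p)
        = (∫⁻ q : ℝ × ℝ, W q.1 q.2 ^ p ∂(μ.prod μ)).toReal := by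
    intro p hp
    have hmb : Measurable fun q : ℝ × ℝ => |U q.1 q.2| ^ p :=
      hmeas.abs.pow measurable_const
    rw [MeasureTheory.integral_eq_lintegral_of_nonneg_ae
      (ae_of_all _ fun q => by positivity) hmb.aestronglyMeasurable]
    rw [hsquare]
    congr 1
    refine lintegral_congr fun q => ?_
    simp only [hWdef]
    rw [ENNReal.ofReal_rpow_of_nonneg (abs_nonneg _) hp]
  have hAreal : (∫ q in Set.Icc (0:ℝ) 1 ×ˢ Set.Icc (0:ℝ) 1, |U q.1 q.2| ^ (Δ : ℝ))
      = A.toReal := by rw [habs _ (by positivity), hA]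
  have hBreal : (∫ q in Set.Icc (0:ℝ) 1 ×ˢ Set.Icc (0:ℝ) 1, |U q.1 q.2| ^ (2 : ℝ))
      = B.toReal := by rw [habs _ (by norm_num), hB]
  have hAtop : A ^ ((m : ℝ) / (Δ : ℝ)) ≠ ⊤ := by
    refine ne_top_of_le_ne_top ENNReal.one_ne_top ?_
    calc A ^ ((m : ℝ) / (Δ : ℝ)) ≤ (1 : ℝ≥0∞) ^ ((m : ℝ) / (Δ : ℝ)) :=
        ENNReal.rpow_le_rpow hA1 (by positivity)
      _ = 1 := ENNReal.one_rpow _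
  have hBtop : B ^ ((m : ℝ) / (Δ : ℝ)) ≠ ⊤ := by
    refine ne_top_of_le_ne_top ENNReal.one_ne_top ?_
    calc B ^ ((m : ℝ) / (Δ : ℝ)) ≤ (1 : ℝ≥0∞) ^ ((m : ℝ) / (Δ : ℝ)) :=
        ENNReal.rpow_le_rpow hB1 (by positivity)
      _ = 1 := ENNReal.one_rpow _
  -- relating the real RHS to `toReal` of `A ^ (m/Δ)`
  have hRHS : ((∫ q in Set.Icc (0:ℝ) 1 ×ˢ Set.Icc (0:ℝ) 1, |U q.1 q.2| ^ (Δ : ℝ))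
        ^ (1 / (Δ:ℝ))) ^ m = (A ^ ((m : ℝ) / (Δ : ℝ))).toReal := by
    rw [hAreal]
    rw [← Real.rpow_natCast (A.toReal ^ (1 / (Δ:ℝ))) m,
      ← Real.rpow_mul ENNReal.toReal_nonneg]
    rw [show 1 / (Δ:ℝ) * (m : ℝ) = (m : ℝ) / (Δ : ℝ) by ring]
    rw [ENNReal.toReal_rpow]
  constructor
  · -- first inequality via the Finner-type bound
    have hPmeas : Measurable fun x : Fin v → ℝ => ∏ e ∈ F.edgeFinset,
        Sym2.lift ⟨fun i j => U (x i) (x j), fun i j => hsym (x i) (x j)⟩ e := by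
      refine Finset.measurable_prod _ fun e _ => ?_
      induction e with
      | _ a b =>
        simp only [Sym2.lift_mk]
        have h1 : Measurable fun x : Fin v → ℝ => (x a, x b) :=
          (measurable_pi_apply a).prodMk (measurable_pi_apply b)
        exact hmeas.comp h1
    have hdeg : ∀ a : Fin v, (F.edgeFinset.filter (fun e => a ∈ e)).card + (0:ℕ) ≤ Δ := by
      intro a
      rw [Nat.add_zero, ← SimpleGraph.incidenceFinset_eq_filter,
        SimpleGraph.card_incidenceFinset_eq_degree]
      exact F.degree_le_maxDegree a
    have hfin := finner (μ := μ) hW hWsym hΔ0 A hA Finset.univ F.edgeFinset (fun _ => 0)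
      (fun e he => SimpleGraph.not_isDiag_of_mem_edgeFinset he)
      (fun e _ a _ => Finset.mem_univ a) (fun a h => absurd rfl h) hdeg (fun _ => 0)
    have hfin' : ∫⁻ x, FF μ W Δ hWsym F.edgeFinset (fun _ => 0) x
        ∂(Measure.pi fun _ : Fin v => μ)
          ≤ A ^ (((F.edgeFinset.card + ∑ a : Fin v, 0 : ℕ) : ℝ) / (Δ : ℝ)) :=
      (lintegral_eq_lmarginal_univ (fun _ => (0:ℝ))).trans_le hfin
    have hFF0 : ∀ x : Fin v → ℝ, ENNReal.ofReal |∏ e ∈ F.edgeFinset,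
        Sym2.lift ⟨fun i j => U (x i) (x j), fun i j => hsym (x i) (x j)⟩ e|
        = FF μ W Δ hWsym F.edgeFinset (fun _ => 0) x := by
      intro x
      rw [FF]
      simp only [pow_zero, Finset.prod_const_one, mul_one]
      rw [Finset.abs_prod, ENNReal.ofReal_prod_of_nonneg (fun _ _ => abs_nonneg _)]
      refine Finset.prod_congr rfl fun e _ => ?_
      induction e with
      | _ a b => simp [Sym2.lift_mk, hWdef]
    calc |∫ x in Set.univ.pi fun _ : Fin v => Set.Icc (0 : ℝ) 1,
          ∏ e ∈ F.edgeFinset,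
            Sym2.lift ⟨fun i j => U (x i) (x j), fun i j => hsym (x i) (x j)⟩ e|
        ≤ ∫ x in Set.univ.pi fun _ : Fin v => Set.Icc (0 : ℝ) 1,
            |∏ e ∈ F.edgeFinset,
              Sym2.lift ⟨fun i j => U (x i) (x j), fun i j => hsym (x i) (x j)⟩ e| :=
          by simpa only [Real.norm_eq_abs] using
            norm_integral_le_integral_norm (μ := (volume : Measure (Fin v → ℝ)).restrict
              (Set.univ.pi fun _ => Set.Icc 0 1)) fun x => ∏ e ∈ F.edgeFinset,
                Sym2.lift ⟨fun i j => U (x i) (x j), fun i j => hsym (x i) (x j)⟩ e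
      _ = (∫⁻ x, ENNReal.ofReal |∏ e ∈ F.edgeFinset,
            Sym2.lift ⟨fun i j => U (x i) (x j), fun i j => hsym (x i) (x j)⟩ e|
              ∂((volume : Measure (Fin v → ℝ)).restrict
                (Set.univ.pi fun _ => Set.Icc 0 1))).toReal :=
          MeasureTheory.integral_eq_lintegral_of_nonneg_ae
            (ae_of_all _ fun x => abs_nonneg _) hPmeas.abs.aestronglyMeasurable
      _ = (∫⁻ x, FF μ W Δ hWsym F.edgeFinset (fun _ => 0) x
            ∂(Measure.pi fun _ => μ)).toReal := by
          rw [hbox]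
          congr 1
          exact lintegral_congr fun x => hFF0 x
      _ ≤ (A ^ ((m : ℝ) / (Δ : ℝ))).toReal := by
          refine ENNReal.toReal_mono hAtop ?_
          refine le_trans hfin' ?_
          simp [hm]
      _ = _ := hRHS.symm
  · -- second inequality: `A ≤ B` since `|U| ≤ 1` and `Δ ≥ 2`
    rw [hRHS, hBreal]
    have hAB : A ≤ B := by
      rw [hA, hB]
      refine lintegral_mono fun q => ?_
      exact ENNReal.rpow_le_rpow_of_exponent_ge (hW1 _ _) (by exact_mod_cast hΔ)
    have h2 : (B.toReal ^ ((1:ℝ)/2)) ^ ((2 * (m:ℕ) : ℝ) / (Δ : ℝ))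
        = (B ^ ((m : ℝ) / (Δ : ℝ))).toReal := by
      rw [← Real.rpow_mul ENNReal.toReal_nonneg]
      rw [show (1:ℝ)/2 * ((2 * (m:ℕ) : ℝ) / (Δ : ℝ)) = (m : ℝ) / (Δ : ℝ) by ring]
      rw [ENNReal.toReal_rpow]
    rw [h2]
    exact ENNReal.toReal_mono hBtop (ENNReal.rpow_le_rpow hAB (by positivity))
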